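/- If p is a positive C² function on open D ⊆ ℝ^d satisfying Σ_{i,j} ∂_i(V_{ij} ∂_j p) = 0 (the uniform-matching equation), then the asymptotic risk of p relative to the uniform prior is R(b^p) − R(0) = −(1/2) Σ_{i,j} V_{ij} (∂_i p)(∂_j p)/p² ≤ 0 pointwise, with strict inequality wherever ∇p ≠ 0 and V is positive definite. -/

import Mathlib

open Real

/-- Partial derivative `∂_i f x`. -/
noncomputable def pd {d : ℕ} (i : Fin d) (f : (Fin d → ℝ) → ℝ) (x : Fin d → ℝ) : ℝ :=
  fderiv ℝ f x (Pi.single i 1)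

section aux
variable {d : ℕ} {D : Set (Fin d → ℝ)} {p : (Fin d → ℝ) → ℝ}

lemma pd_diffAt (hD : IsOpen D) (hp : ContDiffOn ℝ 2 p D) (j : Fin d)
    {x : Fin d → ℝ} (hx : x ∈ D) :
    DifferentiableAt ℝ (fun y => pd j p y) x := by
  have h1 : ContDiffAt ℝ 1 (fderiv ℝ p) x :=
    (hp.contDiffAt (hD.mem_nhds hx)).fderiv_right (by norm_num)
  have := (h1.differentiableAt one_ne_zero).clm_apply
    (differentiableAt_const (Pi.single j (1:ℝ)))
  exact this

lemma bp_eq (hD : IsOpen D) (hp : ContDiffOn ℝ 2 p D) (hppos : ∀ x ∈ D, 0 < p x)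
    (j : Fin d) {x : Fin d → ℝ} (hx : x ∈ D) :
    pd j (fun y => Real.log (p y)) x = pd j p x / p x := by
  have hpd : DifferentiableAt ℝ p x :=
    ((hp.contDiffAt (hD.mem_nhds hx)).differentiableAt (by norm_num))
  have hlog : HasFDerivAt (fun y => Real.log (p y)) ((p x)⁻¹ • fderiv ℝ p x) x :=
    hpd.hasFDerivAt.log (ne_of_gt (hppos x hx))
  simp [pd, hlog.fderiv, div_eq_inv_mul]

end aux

theorem stmt14 {d : ℕ} (D : Set (Fin d → ℝ)) (hD : IsOpen D)
    (V : Fin d → Fin d → (Fin d → ℝ) → ℝ)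
    (hV : ∀ i j, ContDiffOn ℝ 1 (V i j) D)
    (hVsym : ∀ i j x, V i j x = V j i x)
    (hVpsd : ∀ x ∈ D, ∀ c : Fin d → ℝ, 0 ≤ ∑ i, ∑ j, c i * c j * V i j x)
    (p : (Fin d → ℝ) → ℝ) (hp : ContDiffOn ℝ 2 p D) (hppos : ∀ x ∈ D, 0 < p x)
    (hmatch : ∀ x ∈ D, ∑ i, ∑ j, pd i (fun y => V i j y * pd j p y) x = 0)
    (bp : Fin d → (Fin d → ℝ) → ℝ)
    (hbp : ∀ i x, bp i x = pd i (fun y => Real.log (p y)) x) :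
    ∀ x ∈ D,
      (∑ i, ∑ j, (pd i (fun y => V i j y * bp j y) x + (1/2) * bp i x * bp j x * V i j x))
          = -(1/2) * (∑ i, ∑ j, V i j x * pd i p x * pd j p x) / (p x) ^ 2 ∧
      (∑ i, ∑ j, (pd i (fun y => V i j y * bp j y) x + (1/2) * bp i x * bp j x * V i j x))
          ≤ 0 ∧
      ((∃ i, pd i p x ≠ 0) →
        (∀ c : Fin d → ℝ, c ≠ 0 → 0 < ∑ i, ∑ j, c i * c j * V i j x) →
        (∑ i, ∑ j, (pd i (fun y => V i j y * bp j y) x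
            + (1/2) * bp i x * bp j x * V i j x)) < 0) := by
  intro x hx
  have hpx : (0:ℝ) < p x := hppos x hx
  have hbpD : ∀ j : Fin d, ∀ y ∈ D, bp j y = pd j p y / p y := by
    intro j y hy
    rw [hbp j y, bp_eq hD hp hppos j hy]
  -- key term rewrite
  have key : ∀ i j : Fin d,
      pd i (fun y => V i j y * bp j y) x
        = (pd i (fun y => V i j y * pd j p y) x) / p x
          - V i j x * pd j p x * pd i p x / (p x) ^ 2 := by
    intro i j
    have hVd : DifferentiableAt ℝ (V i j) x :=
      ((hV i j).contDiffAt (hD.mem_nhds hx)).differentiableAt one_ne_zero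
    have hqd : DifferentiableAt ℝ (fun y => pd j p y) x := pd_diffAt hD hp j hx
    have hpd : DifferentiableAt ℝ p x :=
      (hp.contDiffAt (hD.mem_nhds hx)).differentiableAt (by norm_num)
    have hNd : DifferentiableAt ℝ (fun y => V i j y * pd j p y) x := hVd.mul hqd
    have hinv : HasFDerivAt (fun y => (p y)⁻¹) ((-((p x) ^ 2)⁻¹) • fderiv ℝ p x) x :=
      (hasDerivAt_inv (ne_of_gt hpx)).comp_hasFDerivAt x hpd.hasFDerivAt
    have hdiv : HasFDerivAt (fun y => (V i j y * pd j p y) * (p y)⁻¹)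
        ((V i j x * pd j p x) • ((-((p x) ^ 2)⁻¹) • fderiv ℝ p x)
          + (p x)⁻¹ • fderiv ℝ (fun y => V i j y * pd j p y) x) x :=
      hNd.hasFDerivAt.mul hinv
    have heq : (fun y => V i j y * bp j y) =ᶠ[nhds x]
        (fun y => (V i j y * pd j p y) * (p y)⁻¹) := by
      filter_upwards [hD.mem_nhds hx] with y hy
      rw [hbpD j y hy]; ring
    rw [pd, heq.fderiv_eq, hdiv.fderiv]
    simp [pd]
    field_simp
    ring
  have hbpx : ∀ j : Fin d, bp j x = pd j p x / p x := fun j => hbpD j x hx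
  -- compute the sum
  have hsum : (∑ i, ∑ j, (pd i (fun y => V i j y * bp j y) x
        + (1/2) * bp i x * bp j x * V i j x))
      = -(1/2) * (∑ i, ∑ j, V i j x * pd i p x * pd j p x) / (p x) ^ 2 := by
    have : ∀ i j : Fin d,
        pd i (fun y => V i j y * bp j y) x + (1/2) * bp i x * bp j x * V i j x
          = (pd i (fun y => V i j y * pd j p y) x) / p x
            + (-(1/2) * (V i j x * pd i p x * pd j p x)) / (p x) ^ 2 := by
      intro i j
      rw [key i j, hbpx i, hbpx j]
      field_simp
      ring
    calc (∑ i, ∑ j, (pd i (fun y => V i j y * bp j y) x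
          + (1/2) * bp i x * bp j x * V i j x))
        = ∑ i, ∑ j, ((pd i (fun y => V i j y * pd j p y) x) / p x
            + (-(1/2) * (V i j x * pd i p x * pd j p x)) / (p x) ^ 2) := by
          exact Finset.sum_congr rfl fun i _ => Finset.sum_congr rfl fun j _ => this i j
      _ = (∑ i, ∑ j, pd i (fun y => V i j y * pd j p y) x) / p x
            + (-(1/2) * (∑ i, ∑ j, V i j x * pd i p x * pd j p x)) / (p x) ^ 2 := by
          simp [Finset.sum_add_distrib, Finset.sum_div, Finset.mul_sum, neg_div, Finset.sum_neg_distrib]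
      _ = -(1/2) * (∑ i, ∑ j, V i j x * pd i p x * pd j p x) / (p x) ^ 2 := by
          rw [hmatch x hx]; ring
  refine ⟨hsum, ?_, ?_⟩
  · rw [hsum]
    have hS : 0 ≤ ∑ i, ∑ j, V i j x * pd i p x * pd j p x := by
      have := hVpsd x hx (fun i => pd i p x)
      calc (0:ℝ) ≤ ∑ i, ∑ j, pd i p x * pd j p x * V i j x := this
        _ = ∑ i, ∑ j, V i j x * pd i p x * pd j p x := by
            exact Finset.sum_congr rfl fun i _ => Finset.sum_congr rfl fun j _ => by ring
    have : (0:ℝ) < (p x)^2 := by positivity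
    rw [neg_mul, neg_div]
    simp only [neg_nonpos]
    positivity
  · rintro ⟨i0, hi0⟩ hpdpos
    rw [hsum]
    have hc : (fun i => pd i p x) ≠ 0 := by
      intro h
      exact hi0 (congrFun h i0)
    have hS : 0 < ∑ i, ∑ j, V i j x * pd i p x * pd j p x := by
      have := hpdpos (fun i => pd i p x) hc
      calc (0:ℝ) < ∑ i, ∑ j, pd i p x * pd j p x * V i j x := this
        _ = ∑ i, ∑ j, V i j x * pd i p x * pd j p x := by
            exact Finset.sum_congr rfl fun i _ => Finset.sum_congr rfl fun j _ => by ring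
    have hp2 : (0:ℝ) < (p x)^2 := by positivity
    rw [neg_mul, neg_div, neg_lt_zero]
    positivity
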